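/- Let m and n be coprime integers with 0 < m < n and let μ ∈ ℤ^n be dominant (μ_1 ≥ μ_2 ≥ … ≥ μ_n). Then the set B(μ,m,n) contains a unique maximal element with respect to the dominance order, i.e., there exists ν ∈ B(μ,m,n) such that every v ∈ B(μ,m,n) satisfies Σ_{j=1}^k v_j ≤ Σ_{j=1}^k ν_j for all k ∈ {1,…,n}. -/

import Mathlib

def psum {n : ℕ} (v : Fin n → ℚ) (k : ℕ) : ℚ :=
  ∑ j ∈ Finset.univ.filter (fun j : Fin n => (j : ℕ) < k), v j

def Bset (m n : ℕ) (μ : Fin n → ℤ) : Set (Fin n → ℚ) :=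
  {v | Antitone v ∧
    psum v n = psum (fun i => (μ i : ℚ)) n + (m : ℚ) ∧
    (∀ k : ℕ, 1 ≤ k → k ≤ n - 1 →
      psum v k ≤ psum (fun i => (μ i : ℚ)) k + ((k : ℚ) * (m : ℚ)) / (n : ℚ)) ∧
    (∀ j : Fin n, ∀ h : (j : ℕ) + 1 < n,
      v ⟨(j : ℕ) + 1, h⟩ < v j → ∃ z : ℤ, psum v ((j : ℕ) + 1) = (z : ℚ))}


lemma psum_zero {n : ℕ} (v : Fin n → ℚ) : psum v 0 = 0 := by
  simp [psum]

lemma psum_succ {n : ℕ} (v : Fin n → ℚ) (k : ℕ) (hk : k < n) :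
    psum v (k + 1) = psum v k + v ⟨k, hk⟩ := by
  unfold psum
  have : Finset.univ.filter (fun j : Fin n => (j : ℕ) < k + 1)
      = insert ⟨k, hk⟩ (Finset.univ.filter (fun j : Fin n => (j : ℕ) < k)) := by
    ext j
    simp only [Finset.mem_insert, Finset.mem_filter, Finset.mem_univ, true_and]
    constructor
    · intro h
      rcases Nat.lt_succ_iff_lt_or_eq.mp h with h | h
      · exact Or.inr h
      · exact Or.inl (by ext; simpa using h)
    · rintro (rfl | h)
      · simp
      · exact Nat.lt_succ_of_lt h
  rw [this, Finset.sum_insert (by simp), add_comm]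

lemma psum_stable {n : ℕ} (v : Fin n → ℚ) (k : ℕ) (hk : n ≤ k) :
    psum v k = psum v n := by
  unfold psum
  congr 1
  ext j
  simp only [Finset.mem_filter, Finset.mem_univ, true_and]
  exact ⟨fun _ => j.isLt, fun h => lt_of_lt_of_le j.isLt hk⟩

namespace BMax


variable (m n : ℕ) (μ : Fin n → ℤ)

noncomputable def f (k : ℕ) : ℚ := psum (fun i => (μ i : ℚ)) k + ((k : ℚ) * m) / n

noncomputable def g (k : ℕ) : ℚ :=
  if k = 0 then 0 else if k < n then (⌊f m n μ k⌋ : ℚ) else f m n μ n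

noncomputable def slope (t b : ℕ) : ℚ := (g m n μ b - g m n μ t) / ((b : ℚ) - t)

lemma g_eq_of_slope {t b : ℕ} (h : t < b) :
    g m n μ b = g m n μ t + ((b : ℚ) - t) * slope m n μ t b := by
  have hb : ((b : ℚ) - t) ≠ 0 := by
    have : (t : ℚ) < b := by exact_mod_cast h
    linarith
  rw [slope, mul_div_cancel₀ _ hb]; ring

lemma exists_next (t : ℕ) (h : t < n) :
    ∃ b ∈ Finset.Icc (t + 1) n, ∀ c ∈ Finset.Icc (t + 1) n,
      slope m n μ t c ≤ slope m n μ t b := by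
  apply Finset.exists_max_image
  exact ⟨n, by simp [Nat.succ_le_of_lt h]⟩

noncomputable def next (t : ℕ) : ℕ :=
  if h : t < n then Classical.choose (exists_next m n μ t h) else n

lemma next_mem {t : ℕ} (h : t < n) : next m n μ t ∈ Finset.Icc (t + 1) n := by
  rw [next, dif_pos h]
  exact (Classical.choose_spec (exists_next m n μ t h)).1

lemma next_max {t : ℕ} (h : t < n) : ∀ c ∈ Finset.Icc (t + 1) n,
    slope m n μ t c ≤ slope m n μ t (next m n μ t) := by
  rw [next, dif_pos h]
  exact (Classical.choose_spec (exists_next m n μ t h)).2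

lemma next_gt {t : ℕ} (h : t < n) : t < next m n μ t := by
  have := next_mem m n μ h; simp only [Finset.mem_Icc] at this; omega

lemma next_le (t : ℕ) : next m n μ t ≤ n := by
  by_cases h : t < n
  · have := next_mem m n μ h; simp only [Finset.mem_Icc] at this; omega
  · rw [next, dif_neg h]

lemma next_of_ge {t : ℕ} (h : n ≤ t) : next m n μ t = n := by
  rw [next, dif_neg (by omega)]

noncomputable def vv : ℕ → ℕ
  | 0 => 0
  | i + 1 => next m n μ (vv i)

lemma vv_le (i : ℕ) : vv m n μ i ≤ n := by
  cases i with
  | zero => simp [vv]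
  | succ i => exact next_le m n μ _

lemma vv_mono : Monotone (vv m n μ) := by
  apply monotone_nat_of_le_succ
  intro i
  by_cases h : vv m n μ i < n
  · exact le_of_lt (next_gt m n μ h)
  · have : vv m n μ i = n := le_antisymm (vv_le m n μ i) (not_lt.mp h)
    show vv m n μ i ≤ next m n μ (vv m n μ i)
    rw [next_of_ge m n μ (by omega), this]

lemma le_vv (i : ℕ) : min i n ≤ vv m n μ i := by
  induction i with
  | zero => simp [vv]
  | succ i ih =>
    by_cases h : vv m n μ i < n
    · have h2 : vv m n μ i + 1 ≤ vv m n μ (i + 1) := next_gt m n μ h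
      omega
    · have : vv m n μ i = n := le_antisymm (vv_le m n μ i) (not_lt.mp h)
      show min (i+1) n ≤ next m n μ (vv m n μ i)
      rw [this, next_of_ge m n μ le_rfl]
      omega

lemma vv_n : vv m n μ n = n := le_antisymm (vv_le m n μ n) (by simpa using le_vv m n μ n)

end BMax

namespace BMax

variable (m n : ℕ) (μ : Fin n → ℤ)

noncomputable def idxSet (k : ℕ) : Finset ℕ :=
  (Finset.range (n + 1)).filter (fun i => vv m n μ i ≤ k)

lemma idxSet_ne (k : ℕ) : (idxSet m n μ k).Nonempty :=
  ⟨0, by simp [idxSet, vv]⟩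

noncomputable def idx (k : ℕ) : ℕ := (idxSet m n μ k).max' (idxSet_ne m n μ k)

lemma idx_mem (k : ℕ) : idx m n μ k ∈ idxSet m n μ k :=
  (idxSet m n μ k).max'_mem (idxSet_ne m n μ k)

lemma idx_le (k : ℕ) : idx m n μ k ≤ n := by
  have h := idx_mem m n μ k
  simp only [idxSet, Finset.mem_filter, Finset.mem_range] at h
  omega

lemma vv_idx_le (k : ℕ) : vv m n μ (idx m n μ k) ≤ k := by
  have h := idx_mem m n μ k
  simp only [idxSet, Finset.mem_filter, Finset.mem_range] at h
  exact h.2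

lemma le_idx {k i : ℕ} (hi : i ≤ n) (h : vv m n μ i ≤ k) : i ≤ idx m n μ k :=
  Finset.le_max' _ i (by simp [idxSet, Finset.mem_filter, Nat.lt_succ_iff, hi, h])

lemma idx_mono : Monotone (idx m n μ) := by
  intro k k' h
  exact le_idx m n μ (idx_le m n μ k) (le_trans (vv_idx_le m n μ k) h)

lemma idx_lt {k : ℕ} (hk : k < n) : idx m n μ k < n := by
  by_contra hc
  push_neg at hc
  have h1 : idx m n μ k = n := le_antisymm (idx_le m n μ k) hc
  have h2 := vv_idx_le m n μ k
  rw [h1, vv_n] at h2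
  omega

lemma lt_vv_idx_succ {k : ℕ} (hk : k < n) : k < vv m n μ (idx m n μ k + 1) := by
  by_contra h
  push_neg at h
  have h2 : idx m n μ k + 1 ≤ idx m n μ k :=
    le_idx m n μ (by have := idx_lt m n μ hk; omega) h
  omega

lemma vv_idx_vv (i : ℕ) : vv m n μ (idx m n μ (vv m n μ i)) = vv m n μ i := by
  refine le_antisymm (vv_idx_le m n μ _) ?_
  have h1 : vv m n μ (min i n) = vv m n μ i := by
    rcases le_or_gt i n with h | h
    · rw [min_eq_left h]
    · have h3 := le_vv m n μ i
      have h4 : vv m n μ i = n := le_antisymm (vv_le m n μ i) (by omega)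
      rw [min_eq_right h.le, vv_n, h4]
  have h2 : min i n ≤ idx m n μ (vv m n μ i) :=
    le_idx m n μ (min_le_right _ _) (le_of_eq h1)
  calc vv m n μ i = vv m n μ (min i n) := h1.symm
    _ ≤ _ := vv_mono m n μ h2

noncomputable def H (k : ℕ) : ℚ :=
  g m n μ (vv m n μ (idx m n μ k)) +
    ((k : ℚ) - (vv m n μ (idx m n μ k) : ℚ)) *
      slope m n μ (vv m n μ (idx m n μ k)) (vv m n μ (idx m n μ k + 1))

lemma H_vertex {k : ℕ} (h : vv m n μ (idx m n μ k) = k) : H m n μ k = g m n μ k := by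
  rw [H, h]; ring_nf

lemma H_zero : H m n μ 0 = 0 := by
  have h : vv m n μ (idx m n μ 0) = 0 := Nat.le_zero.mp (vv_idx_le m n μ 0)
  rw [H_vertex m n μ h, g, if_pos rfl]

lemma H_n : H m n μ n = g m n μ n := by
  have h := vv_idx_vv m n μ n
  rw [vv_n] at h
  exact H_vertex m n μ h

lemma H_succ {k : ℕ} (hk : k < n) :
    H m n μ (k + 1) - H m n μ k =
      slope m n μ (vv m n μ (idx m n μ k)) (vv m n μ (idx m n μ k + 1)) := by
  set i := idx m n μ k with hi
  set t := vv m n μ i with ht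
  set b := vv m n μ (i + 1) with hb
  have htk : t ≤ k := vv_idx_le m n μ k
  have hkb : k < b := lt_vv_idx_succ m n μ hk
  have hiln : i < n := idx_lt m n μ hk
  rcases Nat.lt_or_ge (k + 1) b with h | h
  · -- idx (k+1) = i
    have hidx : idx m n μ (k + 1) = i := by
      refine le_antisymm ?_ (idx_mono m n μ (Nat.le_succ k))
      by_contra hc
      push_neg at hc
      have : b ≤ vv m n μ (idx m n μ (k + 1)) := vv_mono m n μ hc
      have := vv_idx_le m n μ (k + 1)
      omega
    rw [H, H, hidx, ← hi, ← ht, ← hb]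
    push_cast
    ring
  · -- b = k + 1, vertex
    have hbe : b = k + 1 := le_antisymm h hkb
    have h5 := vv_idx_vv m n μ (i + 1)
    rw [← hb, hbe] at h5
    have hH1 : H m n μ (k + 1) = g m n μ (k + 1) := H_vertex m n μ h5
    have hH0 : H m n μ k = g m n μ t + ((k : ℚ) - t) * slope m n μ t b := by
      rw [H, ← hi, ← ht, ← hb]
    have hgb : g m n μ b = g m n μ t + ((b : ℚ) - t) * slope m n μ t b :=
      g_eq_of_slope m n μ (lt_of_le_of_lt htk hkb)
    have hcast : ((b : ℚ)) = (k : ℚ) + 1 := by exact_mod_cast hbe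
    rw [hH1, hH0, show (k + 1 : ℕ) = b from hbe.symm, hgb, hcast]
    ring

end BMax

namespace BMax

variable (m n : ℕ) (μ : Fin n → ℤ)

noncomputable def D (i : ℕ) : ℚ := slope m n μ (vv m n μ i) (vv m n μ (i + 1))

lemma D_step {i : ℕ} (h : vv m n μ (i + 1) < n) : D m n μ (i + 1) ≤ D m n μ i := by
  set t := vv m n μ i with ht
  set b := vv m n μ (i + 1) with hb
  set c := vv m n μ (i + 2) with hc
  have htn : t < n := by
    by_contra hcon
    push_neg at hcon
    have : b = n := by rw [hb, vv]; exact next_of_ge m n μ hcon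
    omega
  have htb : t < b := by
    have : t < next m n μ t := next_gt m n μ htn
    rwa [ht, ← show vv m n μ (i+1) = next m n μ (vv m n μ i) from rfl, ← hb] at this
  have hbc : b < c := by
    have : b < next m n μ b := next_gt m n μ h
    rwa [hb, ← show vv m n μ (i+2) = next m n μ (vv m n μ (i+1)) from rfl, ← hc] at this
  have hcn : c ≤ n := vv_le m n μ (i + 2)
  have hmax : slope m n μ t c ≤ slope m n μ t b := by
    have h1 : c ∈ Finset.Icc (t + 1) n := by simp [Finset.mem_Icc]; omega
    have := next_max m n μ htn c h1
    rwa [← show vv m n μ (i+1) = next m n μ (vv m n μ i) from rfl, ← hb] at this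
  -- goal : slope b c ≤ slope t b
  show slope m n μ b c ≤ slope m n μ t b
  have htbQ : (t:ℚ) < b := by exact_mod_cast htb
  have hbcQ : (b:ℚ) < c := by exact_mod_cast hbc
  have e1 : g m n μ b = g m n μ t + ((b:ℚ) - t) * slope m n μ t b := g_eq_of_slope m n μ htb
  have e2 : g m n μ c = g m n μ b + ((c:ℚ) - b) * slope m n μ b c := g_eq_of_slope m n μ hbc
  have e3 : g m n μ c = g m n μ t + ((c:ℚ) - t) * slope m n μ t c :=
    g_eq_of_slope m n μ (lt_trans htb hbc)
  have h5 : ((c:ℚ) - t) * slope m n μ t c ≤ ((c:ℚ) - t) * slope m n μ t b :=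
    mul_le_mul_of_nonneg_left hmax (by linarith)
  have h6 : ((c:ℚ) - b) * slope m n μ b c ≤ ((c:ℚ) - b) * slope m n μ t b := by linarith
  exact le_of_mul_le_mul_left h6 (by linarith)

lemma D_chain {i j : ℕ} (hij : i ≤ j) (hj : vv m n μ j < n) : D m n μ j ≤ D m n μ i := by
  induction j, hij using Nat.le_induction with
  | base => exact le_rfl
  | succ j hij ih =>
    exact le_trans (D_step m n μ hj)
      (ih (lt_of_le_of_lt (vv_mono m n μ (Nat.le_succ j)) hj))

lemma H_succ' {k : ℕ} (hk : k < n) : H m n μ (k + 1) - H m n μ k = D m n μ (idx m n μ k) :=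
  H_succ m n μ hk

lemma H_incr_anti {j j' : ℕ} (h : j ≤ j') (hj' : j' < n) :
    H m n μ (j' + 1) - H m n μ j' ≤ H m n μ (j + 1) - H m n μ j := by
  rw [H_succ' m n μ hj', H_succ' m n μ (lt_of_le_of_lt h hj')]
  exact D_chain m n μ (idx_mono m n μ h) (lt_of_le_of_lt (vv_idx_le m n μ j') hj')

lemma g_le_H {k : ℕ} (hk : k ≤ n) : g m n μ k ≤ H m n μ k := by
  rcases eq_or_lt_of_le (vv_idx_le m n μ k) with h | h
  · rw [H_vertex m n μ h]
  · have hkn : k < n := by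
      rcases eq_or_lt_of_le hk with h2 | h2
      · exfalso
        have h3 := vv_idx_vv m n μ n
        rw [vv_n] at h3
        rw [h2] at h
        omega
      · exact h2
    set t := vv m n μ (idx m n μ k) with ht
    set b := vv m n μ (idx m n μ k + 1) with hb
    have htn : t < n := lt_of_lt_of_le h hk
    have hkb : k < b := lt_vv_idx_succ m n μ hkn
    have hmax : slope m n μ t k ≤ slope m n μ t b := by
      have h1 : k ∈ Finset.Icc (t + 1) n := by simp [Finset.mem_Icc]; omega
      have := next_max m n μ htn k h1
      rwa [← show vv m n μ (idx m n μ k + 1) = next m n μ (vv m n μ (idx m n μ k)) from rfl,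
        ← hb] at this
    have e1 : g m n μ k = g m n μ t + ((k:ℚ) - t) * slope m n μ t k := g_eq_of_slope m n μ h
    have hH : H m n μ k = g m n μ t + ((k:ℚ) - t) * slope m n μ t b := by
      rw [H, ← ht, ← hb]
    have htkQ : (0:ℚ) ≤ (k:ℚ) - t := by
      have : (t:ℚ) < k := by exact_mod_cast h
      linarith
    have := mul_le_mul_of_nonneg_left hmax htkQ
    linarith

end BMax

namespace BMax

lemma chord_upper {h : ℕ → ℚ} {k b : ℕ} (hkb : k ≤ b)
    (hd : ∀ j, k ≤ j → j + 1 ≤ b → h (j + 1) - h j ≤ h (k + 1) - h k) :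
    h b - h k ≤ ((b : ℚ) - k) * (h (k + 1) - h k) := by
  induction b, hkb using Nat.le_induction with
  | base => simp
  | succ b hkb ih =>
    have h1 : h (b + 1) - h b ≤ h (k + 1) - h k := hd b hkb le_rfl
    have h2 : h b - h k ≤ ((b : ℚ) - k) * (h (k + 1) - h k) :=
      ih (fun j hj hj2 => hd j hj (by omega))
    push_cast
    have hbk : (0:ℚ) ≤ (b:ℚ) - k := by
      have : (k:ℚ) ≤ b := by exact_mod_cast hkb
      linarith
    nlinarith

lemma chord_lower {h : ℕ → ℚ} {a u : ℕ} (hu : 1 ≤ u)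
    (hd : ∀ i j, a ≤ i → i ≤ j → j + 1 ≤ a + u → h (j + 1) - h j ≤ h (i + 1) - h i) :
    ((u : ℚ)) * (h (a + u) - h (a + u - 1)) ≤ h (a + u) - h a := by
  induction u, hu using Nat.le_induction with
  | base => simp
  | succ u hu ih =>
    have ih2 : ((u : ℚ)) * (h (a + u) - h (a + u - 1)) ≤ h (a + u) - h a :=
      ih (fun i j hi hij hj => hd i j hi hij (by omega))
    have h1 : h (a + u + 1) - h (a + u) ≤ h (a + u) - h (a + u - 1) := by
      have := hd (a + u - 1) (a + u) (by omega) (by omega) (by omega)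
      rwa [show a + u - 1 + 1 = a + u by omega] at this
    have huQ : (0:ℚ) ≤ (u:ℚ) := by positivity
    rw [show a + (u + 1) - 1 = a + u from by omega, show a + (u + 1) = a + u + 1 from by omega]
    push_cast
    nlinarith

lemma chord {h : ℕ → ℚ} {a k b : ℕ} (hak : a ≤ k) (hkb : k ≤ b)
    (hd : ∀ i j, a ≤ i → i ≤ j → j + 1 ≤ b → h (j + 1) - h j ≤ h (i + 1) - h i) :
    ((b : ℚ) - k) * h a + ((k : ℚ) - a) * h b ≤ ((b : ℚ) - a) * h k := by
  rcases eq_or_lt_of_le hak with heq | hak'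
  · rw [← heq]; ring_nf; rfl
  rcases eq_or_lt_of_le hkb with heq | heq'
  · rw [heq]; ring_nf; rfl
  -- a < k < b
  have h1 : h b - h k ≤ ((b : ℚ) - k) * (h (k + 1) - h k) :=
    chord_upper hkb (fun j hj hj2 => hd k j hak hj hj2)
  have h2 : ((k - a : ℕ) : ℚ) * (h (a + (k - a)) - h (a + (k - a) - 1)) ≤ h (a + (k - a)) - h a :=
    chord_lower (by omega) (fun i j hi hij hj => hd i j hi hij (by omega))
  rw [show a + (k - a) = k by omega] at h2
  have h3 : h (k + 1) - h k ≤ h k - h (k - 1) := by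
    have := hd (k - 1) k (by omega) (by omega) (by omega)
    rwa [show k - 1 + 1 = k by omega] at this
  rw [show k - 1 = k - 1 by rfl] at h2
  have hc1 : ((k - a : ℕ) : ℚ) = (k : ℚ) - a := by
    push_cast [Nat.cast_sub hak]; ring
  rw [hc1] at h2
  have hbk : (0:ℚ) ≤ (b : ℚ) - k := by
    have : (k:ℚ) ≤ b := by exact_mod_cast hkb
    linarith
  have hka : (0:ℚ) ≤ (k : ℚ) - a := by
    have : (a:ℚ) ≤ k := by exact_mod_cast hak
    linarith
  nlinarith [mul_le_mul_of_nonneg_left h1 hka, mul_le_mul_of_nonneg_left h2 hbk,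
    mul_le_mul_of_nonneg_left h3 (mul_nonneg hka hbk)]

end BMax

namespace BMax

variable (m n : ℕ) (μ : Fin n → ℤ)

lemma f_zero : f m n μ 0 = 0 := by
  simp [f, psum_zero]

lemma f_succ {k : ℕ} (hk : k < n) :
    f m n μ (k + 1) = f m n μ k + (μ ⟨k, hk⟩ : ℚ) + (m : ℚ) / n := by
  unfold f
  rw [psum_succ _ k hk]
  push_cast
  ring

lemma f_incr_anti (hμ : Antitone μ) {i j : ℕ} (hij : i ≤ j) (hj : j < n) :
    f m n μ (j + 1) - f m n μ j ≤ f m n μ (i + 1) - f m n μ i := by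
  have hi : i < n := lt_of_le_of_lt hij hj
  rw [f_succ m n μ hj, f_succ m n μ hi]
  have : μ ⟨j, hj⟩ ≤ μ ⟨i, hi⟩ := hμ (by exact hij)
  have : ((μ ⟨j, hj⟩ : ℤ) : ℚ) ≤ ((μ ⟨i, hi⟩ : ℤ) : ℚ) := by exact_mod_cast this
  linarith

lemma g_le_f {k : ℕ} (hk : k ≤ n) : g m n μ k ≤ f m n μ k := by
  unfold g
  by_cases h0 : k = 0
  · rw [if_pos h0, h0, f_zero]
  rw [if_neg h0]
  by_cases h1 : k < n
  · rw [if_pos h1]; exact Int.floor_le _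
  · rw [if_neg h1]
    have : k = n := by omega
    rw [this]

lemma H_le_f (hμ : Antitone μ) {k : ℕ} (hk : k ≤ n) : H m n μ k ≤ f m n μ k := by
  rcases eq_or_lt_of_le (vv_idx_le m n μ k) with h | h
  · rw [H_vertex m n μ h]; exact g_le_f m n μ hk
  · have hkn : k < n := by
      rcases eq_or_lt_of_le hk with h2 | h2
      · exfalso
        have h3 := vv_idx_vv m n μ n
        rw [vv_n] at h3
        rw [h2] at h
        omega
      · exact h2
    set t := vv m n μ (idx m n μ k) with ht
    set b := vv m n μ (idx m n μ k + 1) with hb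
    have hkb : k < b := lt_vv_idx_succ m n μ hkn
    have hbn : b ≤ n := vv_le m n μ _
    have htb : t < b := lt_trans h hkb
    have e1 : g m n μ b = g m n μ t + ((b:ℚ) - t) * slope m n μ t b := g_eq_of_slope m n μ htb
    have hH : H m n μ k = g m n μ t + ((k:ℚ) - t) * slope m n μ t b := by
      rw [H, ← ht, ← hb]
    have key : ((b:ℚ) - t) * H m n μ k = ((b:ℚ) - k) * g m n μ t + ((k:ℚ) - t) * g m n μ b := by
      rw [hH]
      linear_combination ((t:ℚ) - (k:ℚ)) * e1
    have hch : ((b:ℚ) - k) * f m n μ t + ((k:ℚ) - t) * f m n μ b ≤ ((b:ℚ) - t) * f m n μ k :=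
      chord (le_of_lt h) (le_of_lt hkb)
        (fun i j hi hij hj => f_incr_anti m n μ hμ hij (by omega))
    have hgt : g m n μ t ≤ f m n μ t := g_le_f m n μ (by omega)
    have hgb : g m n μ b ≤ f m n μ b := g_le_f m n μ hbn
    have hbkQ : (0:ℚ) ≤ (b:ℚ) - k := by
      have : (k:ℚ) ≤ b := by exact_mod_cast le_of_lt hkb
      linarith
    have hktQ : (0:ℚ) ≤ (k:ℚ) - t := by
      have : (t:ℚ) ≤ k := by exact_mod_cast le_of_lt h
      linarith
    have htbQ : (0:ℚ) < (b:ℚ) - t := by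
      have : (t:ℚ) < b := by exact_mod_cast htb
      linarith
    have final : ((b:ℚ) - t) * H m n μ k ≤ ((b:ℚ) - t) * f m n μ k := by
      have i1 := mul_le_mul_of_nonneg_left hgt hbkQ
      have i2 := mul_le_mul_of_nonneg_left hgb hktQ
      linarith
    exact le_of_mul_le_mul_left final htbQ

lemma f_n (hn : 0 < n) : f m n μ n = psum (fun i => (μ i : ℚ)) n + (m : ℚ) := by
  unfold f
  have : ((n:ℚ)) ≠ 0 := by positivity
  field_simp

lemma g_n (hn : 0 < n) : g m n μ n = psum (fun i => (μ i : ℚ)) n + (m : ℚ) := by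
  rw [g, if_neg (by omega), if_neg (by omega)]
  exact f_n m n μ hn

lemma g_int {k : ℕ} (h0 : 0 < k) (h1 : k < n) : g m n μ k = ((⌊f m n μ k⌋ : ℤ) : ℚ) := by
  rw [g, if_neg (by omega), if_pos h1]

end BMax

namespace BMax

variable (m n : ℕ) (μ : Fin n → ℤ)

noncomputable def nu : Fin n → ℚ := fun j => H m n μ ((j : ℕ) + 1) - H m n μ (j : ℕ)

lemma psum_nu {k : ℕ} (hk : k ≤ n) : psum (nu m n μ) k = H m n μ k := by
  induction k with
  | zero => rw [psum_zero, H_zero]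
  | succ k ih =>
    have hkn : k < n := by omega
    rw [psum_succ _ k hkn, ih (by omega)]
    show H m n μ k + (H m n μ (k + 1) - H m n μ k) = H m n μ (k + 1)
    ring

lemma nu_mem (hn : 0 < n) (hμ : Antitone μ) : nu m n μ ∈ Bset m n μ := by
  refine ⟨?_, ?_, ?_, ?_⟩
  · -- Antitone
    intro j j' hjj'
    show H m n μ ((j' : ℕ) + 1) - H m n μ (j' : ℕ) ≤ H m n μ ((j : ℕ) + 1) - H m n μ (j : ℕ)
    exact H_incr_anti m n μ (by exact_mod_cast hjj') j'.isLt
  · rw [psum_nu m n μ le_rfl, H_n, g_n m n μ hn]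
  · intro k hk1 hk2
    have hk : k ≤ n := by omega
    rw [psum_nu m n μ hk]
    exact H_le_f m n μ hμ hk
  · intro j h hlt
    set k := (j : ℕ) + 1 with hkdef
    have hk1 : 0 < k := by omega
    have hk2 : k < n := h
    have hjn : (j : ℕ) < n := j.isLt
    -- strict decrease of increments at k
    have hstrict : D m n μ (idx m n μ k) < D m n μ (idx m n μ (j : ℕ)) := by
      have e1 := H_succ' m n μ hk2
      have e2 := H_succ' m n μ hjn
      have hlt' : H m n μ (k + 1) - H m n μ k < H m n μ ((j : ℕ) + 1) - H m n μ (j : ℕ) := by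
        have : nu m n μ ⟨(j : ℕ) + 1, h⟩ = H m n μ (k + 1) - H m n μ k := rfl
        have h2 : nu m n μ j = H m n μ ((j : ℕ) + 1) - H m n μ (j : ℕ) := rfl
        rw [this, h2] at hlt
        exact hlt
      rw [e1, e2] at hlt'
      exact hlt'
    have hvert : vv m n μ (idx m n μ k) = k := by
      by_contra hc
      have h1 : vv m n μ (idx m n μ k) ≤ k := vv_idx_le m n μ k
      have h2 : vv m n μ (idx m n μ k) ≤ (j : ℕ) := by omega
      have h3 : idx m n μ k ≤ idx m n μ (j : ℕ) := le_idx m n μ (idx_le m n μ k) h2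
      have h4 : idx m n μ (j : ℕ) ≤ idx m n μ k := idx_mono m n μ (by omega)
      have h5 : idx m n μ k = idx m n μ (j : ℕ) := le_antisymm h3 h4
      rw [h5] at hstrict
      exact lt_irrefl _ hstrict
    refine ⟨⌊f m n μ k⌋, ?_⟩
    rw [psum_nu m n μ (by omega), H_vertex m n μ hvert, g_int m n μ hk1 hk2]

end BMax

namespace BMax

variable (m n : ℕ) (μ : Fin n → ℤ)

lemma psum_le_H (hn : 0 < n) (hμ : Antitone μ) (v : Fin n → ℚ) (hv : v ∈ Bset m n μ)
    {k : ℕ} (hk : k ≤ n) : psum v k ≤ H m n μ k := by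
  classical
  obtain ⟨hva, hvs, hvb, hvi⟩ := hv
  set Sp : ℕ → Prop := fun p => p = 0 ∨ p = n ∨
    ∃ hp : p < n, ∃ hp0 : 0 < p, v ⟨p, hp⟩ < v ⟨p - 1, by omega⟩ with hSp
  -- special points satisfy the bound
  have hspec : ∀ p, p ≤ n → Sp p → psum v p ≤ H m n μ p := by
    intro p hp hsp
    rcases hsp with h0 | hn' | ⟨hpn, hp0, hbr⟩
    · rw [h0, psum_zero, H_zero]
    · rw [hn', hvs, H_n, g_n m n μ hn]
    · -- breakpoint
      have hj : p - 1 < n := by omega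
      have hfin : (⟨p - 1 + 1, by omega⟩ : Fin n) = ⟨p, hpn⟩ := by
        ext; simp; omega
      have hlt2 : v ⟨(((⟨p - 1, hj⟩ : Fin n)) : ℕ) + 1, by simp; omega⟩ < v ⟨p - 1, hj⟩ := by
        simp only [Fin.val_mk]
        rw [hfin]
        exact hbr
      obtain ⟨z, hz⟩ := hvi ⟨p - 1, hj⟩ (by simp; omega) hlt2
      simp only [Fin.val_mk] at hz
      rw [show p - 1 + 1 = p from by omega] at hz
      have hb := hvb p (by omega) (by omega)
      have hble : psum v p ≤ f m n μ p := hb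
      have hzle : (z : ℚ) ≤ f m n μ p := by rw [← hz]; exact hble
      have hzfl : z ≤ ⌊f m n μ p⌋ := Int.le_floor.mpr hzle
      calc psum v p = (z : ℚ) := hz
        _ ≤ ((⌊f m n μ p⌋ : ℤ) : ℚ) := by exact_mod_cast hzfl
        _ = g m n μ p := (g_int m n μ hp0 (by omega)).symm
        _ ≤ H m n μ p := g_le_H m n μ hp
  by_cases hsk : Sp k
  · exact hspec k hk hsk
  have hk0 : 0 < k := by
    rcases Nat.eq_zero_or_pos k with h | h
    · exact absurd (Or.inl h) hsk
    · exact h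
  have hkn : k < n := by
    rcases eq_or_lt_of_le hk with h | h
    · exact absurd (Or.inr (Or.inl h)) hsk
    · exact h
  -- bracketing special points
  set A : Finset ℕ := (Finset.range (k + 1)).filter Sp with hA
  have hAne : A.Nonempty := ⟨0, by simp [hA, hSp]⟩
  set a := A.max' hAne with ha
  set B : Finset ℕ := (Finset.Icc k n).filter Sp with hB
  have hBne : B.Nonempty := ⟨n, by simp [hB, hSp, hk]⟩
  set b := B.min' hBne with hb
  have haA : a ∈ A := A.max'_mem hAne
  have hbB : b ∈ B := B.min'_mem hBne
  have hak : a ≤ k := by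
    have := haA; simp only [hA, Finset.mem_filter, Finset.mem_range] at this; omega
  have hSa : Sp a := by
    have := haA; simp only [hA, Finset.mem_filter] at this; exact this.2
  have hkb : k ≤ b := by
    have := hbB; simp only [hB, Finset.mem_filter, Finset.mem_Icc] at this; omega
  have hbn : b ≤ n := by
    have := hbB; simp only [hB, Finset.mem_filter, Finset.mem_Icc] at this; omega
  have hSb : Sp b := by
    have := hbB; simp only [hB, Finset.mem_filter] at this; exact this.2
  have hak' : a < k := lt_of_le_of_ne hak (fun h => hsk (h ▸ hSa))
  have hkb' : k < b := lt_of_le_of_ne hkb (fun h => hsk (h ▸ hSb))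
  -- no special points strictly between a and b
  have hnosp : ∀ j, a < j → j < b → ¬ Sp j := by
    intro j hja hjb hspj
    rcases le_or_gt j k with h | h
    · have : j ≤ a := Finset.le_max' A j (by simp [hA, Finset.mem_range]; exact ⟨by omega, hspj⟩)
      omega
    · have : b ≤ j := Finset.min'_le B j (by simp [hB, Finset.mem_Icc]; exact ⟨⟨by omega, by omega⟩, hspj⟩)
      omega
  have han : a < n := by omega
  -- constancy and linearity on [a, b]
  have hlin : ∀ j, a ≤ j → j ≤ b →
      psum v j = psum v a + ((j : ℚ) - a) * v ⟨a, han⟩ ∧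
      (∀ hjn : j < n, j < b → v ⟨j, hjn⟩ = v ⟨a, han⟩) := by
    intro j hj
    induction j, hj using Nat.le_induction with
    | base => exact fun _ => ⟨by ring_nf, fun _ _ => rfl⟩
    | succ j hj ih =>
      intro hjb
      have hjb' : j < b := by omega
      have hjn : j < n := by omega
      obtain ⟨ih1, ih2⟩ := ih (by omega)
      constructor
      · rw [psum_succ v j hjn, ih1, ih2 hjn hjb']
        push_cast
        ring
      · intro hjn1 hjb1
        have hns : ¬ Sp (j + 1) := hnosp (j + 1) (by omega) hjb1
        have hvle : ¬ (v ⟨j + 1, hjn1⟩ < v ⟨j + 1 - 1, by omega⟩) := by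
          intro hcon
          exact hns (Or.inr (Or.inr ⟨hjn1, by omega, hcon⟩))
        have heq1 : (⟨j + 1 - 1, by omega⟩ : Fin n) = ⟨j, hjn⟩ := by ext; simp
        rw [heq1] at hvle
        have hge : v ⟨j, hjn⟩ ≤ v ⟨j + 1, hjn1⟩ := not_lt.mp hvle
        have hle : v ⟨j + 1, hjn1⟩ ≤ v ⟨j, hjn⟩ := hva (by simp [Fin.mk_le_mk])
        rw [le_antisymm hle hge]
        exact ih2 hjn hjb'
  have hpa : psum v k = psum v a + ((k : ℚ) - a) * v ⟨a, han⟩ := (hlin k hak (by omega)).1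
  have hpb : psum v b = psum v a + ((b : ℚ) - a) * v ⟨a, han⟩ := (hlin b (by omega) le_rfl).1
  have hcomb : ((b : ℚ) - a) * psum v k
      = ((b : ℚ) - k) * psum v a + ((k : ℚ) - a) * psum v b := by
    rw [hpa, hpb]; ring
  have hHa : psum v a ≤ H m n μ a := hspec a (by omega) hSa
  have hHb : psum v b ≤ H m n μ b := hspec b hbn hSb
  have hch : ((b : ℚ) - k) * H m n μ a + ((k : ℚ) - a) * H m n μ b
      ≤ ((b : ℚ) - a) * H m n μ k :=
    chord (le_of_lt hak') (le_of_lt hkb')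
      (fun i j hi hij hj => H_incr_anti m n μ hij (by omega))
  have hbkQ : (0:ℚ) ≤ (b:ℚ) - k := by
    have : (k:ℚ) ≤ b := by exact_mod_cast hkb
    linarith
  have hkaQ : (0:ℚ) ≤ (k:ℚ) - a := by
    have : (a:ℚ) ≤ k := by exact_mod_cast hak
    linarith
  have hbaQ : (0:ℚ) < (b:ℚ) - a := by
    have : (a:ℚ) < b := by exact_mod_cast lt_trans hak' hkb'
    linarith
  have final : ((b : ℚ) - a) * psum v k ≤ ((b : ℚ) - a) * H m n μ k := by
    have i1 := mul_le_mul_of_nonneg_left hHa hbkQ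
    have i2 := mul_le_mul_of_nonneg_left hHb hkaQ
    linarith
  exact le_of_mul_le_mul_left final hbaQ

end BMax

theorem maximal_element_of_Bset (m n : ℕ) (hm : 0 < m) (hmn : m < n)
    (hcop : Nat.Coprime m n) (μ : Fin n → ℤ) (hμ : Antitone μ) :
    ∃ ν ∈ Bset m n μ, ∀ v ∈ Bset m n μ, ∀ k : ℕ, 1 ≤ k → k ≤ n →
      psum v k ≤ psum ν k := by
  have hn : 0 < n := by omega
  refine ⟨BMax.nu m n μ, BMax.nu_mem m n μ hn hμ, ?_⟩
  intro v hv k hk1 hk2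
  rw [BMax.psum_nu m n μ hk2]
  exact BMax.psum_le_H m n μ hn hμ v hv hk2
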